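/- Let f : [a,b] → ℝ be four times continuously differentiable with ‖f⁗‖_∞ = sup_{x∈[a,b]} |f⁗(x)| < ∞. Then |(1/3)·[(f(a)+f(b))/2 + 2f((a+b)/2)] − (1/(b-a))∫ₐᵇ f(x) dx| ≤ (1/2880)·‖f⁗‖_∞·(b-a)⁴. -/

import Mathlib

open MeasureTheory Set Topology Filter



lemma poly_bound0 {h C : ℝ} (k : ℕ) {u u' : ℝ → ℝ}
    (hu0 : u 0 = 0)
    (hu : ∀ t ∈ Icc (0:ℝ) h, HasDerivWithinAt u (u' t) (Icc 0 h) t)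
    (hb : ∀ t ∈ Icc (0:ℝ) h, |u' t| ≤ C * t ^ k) :
    ∀ t ∈ Icc (0:ℝ) h, |u t| ≤ C / (k + 1) * t ^ (k + 1) := by
  intro t ht
  have key := image_norm_le_of_norm_deriv_right_le_deriv_boundary
    (f := u) (f' := u') (a := 0) (b := h)
    (fun x hx => (hu x hx).continuousWithinAt)
    (fun x hx => (hu x (Ico_subset_Icc_self hx)).mono_of_mem_nhdsWithin
      (mem_nhdsWithin.mpr ⟨Iio h, isOpen_Iio, hx.2, fun y hy => ⟨hx.1.trans hy.2, hy.1.le⟩⟩))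
    (B := fun s => C / (k + 1) * s ^ (k + 1)) (B' := fun s => C * s ^ k)
    (by rw [hu0]; simp)
    (fun x => by
      have hk : ((k:ℝ) + 1) ≠ 0 := by positivity
      have h1 := (hasDerivAt_pow (k+1) x).const_mul (C / ((k:ℝ) + 1))
      refine h1.congr_deriv ?_
      push_cast
      field_simp)
    (fun x hx => by rw [Real.norm_eq_abs]; exact hb x (Ico_subset_Icc_self hx))
  rw [← Real.norm_eq_abs]
  exact key ht

lemma ftc_icc0 {a b : ℝ} (hab : a < b) {f : ℝ → ℝ}
    (hf : ContinuousOn f (Set.Icc a b)) :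
    ∀ y ∈ Set.Icc a b, HasDerivWithinAt (fun u => ∫ x in a..u, f x) (f y) (Set.Icc a b) y := by
  have hmeas : AEStronglyMeasurable f (volume.restrict (Icc a b)) :=
    hf.aestronglyMeasurable measurableSet_Icc
  intro y hy
  have hint : IntervalIntegrable f volume a y :=
    (hf.mono (by rw [uIcc_of_le hy.1]; exact Icc_subset_Icc_right hy.2)).intervalIntegrable
  haveI : Fact (y ∈ Icc a b) := ⟨hy⟩
  exact intervalIntegral.integral_hasDerivWithinAt_right hint
    ⟨Icc a b, self_mem_nhdsWithin, hmeas⟩ (hf y hy)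


theorem simpson_inequality_classical (a b M : ℝ) (hab : a < b) (f : ℝ → ℝ)
    (hf : ContDiffOn ℝ 4 f (Set.Icc a b))
    (hM : ∀ x ∈ Set.Icc a b, |iteratedDerivWithin 4 f (Set.Icc a b) x| ≤ M) :
    |(1/3) * ((f a + f b) / 2 + 2 * f ((a + b) / 2))
        - (1 / (b - a)) * ∫ x in a..b, f x|
      ≤ (1/2880) * M * (b - a) ^ 4 := by
  have hM0 : 0 ≤ M := le_trans (abs_nonneg _) (hM a ⟨le_rfl, hab.le⟩)
  have hIu : UniqueDiffOn ℝ (Set.Icc a b) := uniqueDiffOn_Icc hab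
  set c : ℝ := (a + b) / 2 with hc
  set h : ℝ := (b - a) / 2 with hh
  have hbapos : 0 < b - a := sub_pos.mpr hab
  have hhpos : 0 < h := by rw [hh]; positivity
  have hch : c - h = a := by rw [hc, hh]; ring
  have hch' : c + h = b := by rw [hc, hh]; ring
  set D1 := iteratedDerivWithin 1 f (Set.Icc a b) with hD1
  set D2 := iteratedDerivWithin 2 f (Set.Icc a b) with hD2
  set D3 := iteratedDerivWithin 3 f (Set.Icc a b) with hD3
  set D4 := iteratedDerivWithin 4 f (Set.Icc a b) with hD4
  have hd : ∀ k : ℕ, k < 4 → ∀ x ∈ Set.Icc a b,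
      HasDerivWithinAt (iteratedDerivWithin k f (Set.Icc a b))
        (iteratedDerivWithin (k+1) f (Set.Icc a b) x) (Set.Icc a b) x := by
    intro k hk x hx
    have hd' := (hf.differentiableOn_iteratedDerivWithin (m := k)
      (by exact_mod_cast hk) hIu x hx).hasDerivWithinAt
    rwa [← iteratedDerivWithin_succ] at hd'
  have hd0 : ∀ x ∈ Set.Icc a b, HasDerivWithinAt f (D1 x) (Set.Icc a b) x := by
    intro x hx; rw [hD1]
    simpa [iteratedDerivWithin_zero] using hd 0 (by norm_num) x hx
  have hd1 : ∀ x ∈ Set.Icc a b, HasDerivWithinAt D1 (D2 x) (Set.Icc a b) x := by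
    intro x hx; rw [hD1, hD2]; simpa using hd 1 (by norm_num) x hx
  have hd2 : ∀ x ∈ Set.Icc a b, HasDerivWithinAt D2 (D3 x) (Set.Icc a b) x := by
    intro x hx; rw [hD2, hD3]; simpa using hd 2 (by norm_num) x hx
  have hd3 : ∀ x ∈ Set.Icc a b, HasDerivWithinAt D3 (D4 x) (Set.Icc a b) x := by
    intro x hx; rw [hD3, hD4]; simpa using hd 3 (by norm_num) x hx
  have hlip : ∀ x ∈ Set.Icc a b, ∀ y ∈ Set.Icc a b, |D3 y - D3 x| ≤ M * |y - x| := by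
    intro x hx y hy
    have := Convex.norm_image_sub_le_of_norm_hasDerivWithin_le (f := D3) (f' := D4)
      (s := Set.Icc a b) hd3 (fun z hz => by rw [Real.norm_eq_abs]; exact hM z hz)
      (convex_Icc a b) hx hy
    simpa [Real.norm_eq_abs] using this
  -- membership of c ± t
  have hmemc : c ∈ Set.Icc a b := ⟨by rw [hc]; linarith, by rw [hc]; linarith⟩
  have hmemp : ∀ t ∈ Icc (0:ℝ) h, c + t ∈ Set.Icc a b := by
    intro t ht
    constructor
    · rw [hc]; have := ht.1; linarith
    · have h2 := ht.2; rw [hh] at h2; rw [hc]; linarith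
  have hmemm : ∀ t ∈ Icc (0:ℝ) h, c - t ∈ Set.Icc a b := by
    intro t ht
    constructor
    · have h2 := ht.2; rw [hh] at h2; rw [hc]; linarith
    · rw [hc]; have := ht.1; linarith
  -- composition derivatives
  have hplus : ∀ (φ φ' : ℝ → ℝ),
      (∀ x ∈ Set.Icc a b, HasDerivWithinAt φ (φ' x) (Set.Icc a b) x) →
      ∀ t ∈ Icc (0:ℝ) h,
        HasDerivWithinAt (fun s => φ (c + s)) (φ' (c + t)) (Icc 0 h) t := by
    intro φ φ' hφ t ht
    have h1 : HasDerivWithinAt (fun s : ℝ => c + s) 1 (Icc 0 h) t :=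
      (hasDerivWithinAt_id t _).const_add c
    have h2 := (hφ (c + t) (hmemp t ht)).comp t h1 (fun s hs => hmemp s hs)
    simpa [Function.comp_def] using h2
  have hminus : ∀ (φ φ' : ℝ → ℝ),
      (∀ x ∈ Set.Icc a b, HasDerivWithinAt φ (φ' x) (Set.Icc a b) x) →
      ∀ t ∈ Icc (0:ℝ) h,
        HasDerivWithinAt (fun s => φ (c - s)) (-φ' (c - t)) (Icc 0 h) t := by
    intro φ φ' hφ t ht
    have h1 : HasDerivWithinAt (fun s : ℝ => c - s) (-1) (Icc 0 h) t :=
      (hasDerivWithinAt_id t _).const_sub c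
    have h2 := (hφ (c - t) (hmemm t ht)).comp t h1 (fun s hs => hmemm s hs)
    simpa [Function.comp_def] using h2
  have hG := ftc_icc0 hab hf.continuousOn
  -- the error functions
  set E0 : ℝ → ℝ := fun t => t/3 * (f (c - t) + f (c + t) + 4 * f c)
      - ((∫ x in a..(c + t), f x) - (∫ x in a..(c - t), f x)) with hE0
  set E1 : ℝ → ℝ := fun t => -(2/3) * (f (c - t) + f (c + t)) + 4/3 * f c
      + t/3 * (D1 (c + t) - D1 (c - t)) with hE1
  set E2 : ℝ → ℝ := fun t => -(1/3) * (D1 (c + t) - D1 (c - t))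
      + t/3 * (D2 (c + t) + D2 (c - t)) with hE2
  set E3 : ℝ → ℝ := fun t => t/3 * (D3 (c + t) - D3 (c - t)) with hE3
  have hid : ∀ t : ℝ, HasDerivWithinAt (fun s : ℝ => s/3) (1/3) (Icc (0:ℝ) h) t :=
    fun t => (hasDerivWithinAt_id t _).div_const 3
  have key0 : ∀ t ∈ Icc (0:ℝ) h, HasDerivWithinAt E0 (E1 t) (Icc 0 h) t := by
    intro t ht
    have hfp := hplus f D1 hd0 t ht
    have hfm := hminus f D1 hd0 t ht
    have hGp := hplus _ f hG t ht
    have hGm := hminus _ f hG t ht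
    have comb := ((hid t).mul ((hfm.add hfp).add_const (4 * f c))).sub (hGp.sub hGm)
    have heq : E1 t = 1/3 * (f (c - t) + f (c + t) + 4 * f c)
        + t/3 * (-D1 (c - t) + D1 (c + t)) - (f (c + t) - -f (c - t)) := by
      rw [hE1]; ring
    rw [hE0, heq]
    exact comb
  have key1 : ∀ t ∈ Icc (0:ℝ) h, HasDerivWithinAt E1 (E2 t) (Icc 0 h) t := by
    intro t ht
    have hfp := hplus f D1 hd0 t ht
    have hfm := hminus f D1 hd0 t ht
    have hD1p := hplus D1 D2 hd1 t ht
    have hD1m := hminus D1 D2 hd1 t ht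
    have comb := (((hfm.add hfp).const_mul (-(2/3) : ℝ)).add_const (4/3 * f c)).add
      ((hid t).mul (hD1p.sub hD1m))
    have heq : E2 t = -(2/3) * (-D1 (c - t) + D1 (c + t))
        + (1/3 * (D1 (c + t) - D1 (c - t)) + t/3 * (D2 (c + t) - -D2 (c - t))) := by
      rw [hE2]; ring
    rw [hE1, heq]
    exact comb
  have key2 : ∀ t ∈ Icc (0:ℝ) h, HasDerivWithinAt E2 (E3 t) (Icc 0 h) t := by
    intro t ht
    have hD1p := hplus D1 D2 hd1 t ht
    have hD1m := hminus D1 D2 hd1 t ht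
    have hD2p := hplus D2 D3 hd2 t ht
    have hD2m := hminus D2 D3 hd2 t ht
    have comb := ((hD1p.sub hD1m).const_mul (-(1/3) : ℝ)).add
      ((hid t).mul (hD2p.add hD2m))
    have heq : E3 t = -(1/3) * (D2 (c + t) - -D2 (c - t))
        + (1/3 * (D2 (c + t) + D2 (c - t)) + t/3 * (D3 (c + t) + -D3 (c - t))) := by
      rw [hE3]; ring
    rw [hE2, heq]
    exact comb
  have hb3 : ∀ t ∈ Icc (0:ℝ) h, |E3 t| ≤ (2*M/3) * t^2 := by
    intro t ht
    have h1 := hlip (c - t) (hmemm t ht) (c + t) (hmemp t ht)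
    rw [show c + t - (c - t) = 2*t by ring,
      abs_of_nonneg (by linarith [ht.1] : (0:ℝ) ≤ 2*t)] at h1
    rw [hE3]
    simp only []
    rw [abs_mul, abs_of_nonneg (by linarith [ht.1] : (0:ℝ) ≤ t/3)]
    calc t/3 * |D3 (c + t) - D3 (c - t)| ≤ t/3 * (M * (2*t)) :=
          mul_le_mul_of_nonneg_left h1 (by linarith [ht.1])
      _ = 2*M/3 * t^2 := by ring
  have hE20 : E2 0 = 0 := by rw [hE2]; simp
  have hE10 : E1 0 = 0 := by rw [hE1]; simp; ring
  have hE00 : E0 0 = 0 := by rw [hE0]; simp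
  have hb2 : ∀ t ∈ Icc (0:ℝ) h, |E2 t| ≤ (2*M/9) * t^3 := by
    have hp := poly_bound0 2 hE20 key2 hb3
    intro t ht
    calc |E2 t| ≤ (2*M/3) / (2+1) * t^(2+1) := hp t ht
      _ = 2*M/9 * t^3 := by push_cast; ring
  have hb1 : ∀ t ∈ Icc (0:ℝ) h, |E1 t| ≤ (M/18) * t^4 := by
    have hp := poly_bound0 3 hE10 key1 hb2
    intro t ht
    calc |E1 t| ≤ (2*M/9) / (3+1) * t^(3+1) := hp t ht
      _ = M/18 * t^4 := by push_cast; ring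
  have hb0 : ∀ t ∈ Icc (0:ℝ) h, |E0 t| ≤ (M/90) * t^5 := by
    have hp := poly_bound0 4 hE00 key0 hb1
    intro t ht
    calc |E0 t| ≤ (M/18) / (4+1) * t^(4+1) := hp t ht
      _ = M/90 * t^5 := by push_cast; ring
  have hbE : |E0 h| ≤ M/90 * h^5 := hb0 h ⟨hhpos.le, le_rfl⟩
  have hEh : E0 h = h/3 * (f a + f b + 4 * f c) - ∫ x in a..b, f x := by
    rw [hE0]
    simp only [hch, hch', intervalIntegral.integral_same, sub_zero]
  have hba : b - a = 2*h := by rw [hh]; ring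
  have hX : (1/3) * ((f a + f b) / 2 + 2 * f c) - (1 / (b - a)) * ∫ x in a..b, f x
      = E0 h / (2*h) := by
    rw [hEh, hba]
    field_simp
    ring
  rw [hX, hba, abs_div, abs_of_pos (by linarith : (0:ℝ) < 2*h)]
  rw [div_le_iff₀ (by linarith : (0:ℝ) < 2*h)]
  refine le_trans hbE (le_of_eq ?_)
  ring
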